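/- Let 0 ≤ K < ∞ and define, for z in the open unit disc 𝔻, A(z) = −( K + 4√(1+K) · (log(e/(1−z)))^{−1} ) / (4(1−z)²) and f(z) = (1−z)^{−(√(1+K)−1)/2} · log(e/(1−z)) (principal branches; note 1−z lies in the right half-plane for z ∈ 𝔻). Then f is a solution of f'' + A f = 0 on 𝔻, the coefficient satisfies |A(z)|(1−|z|²)² ≤ K + 4√(1+K)/log(e/(1−|z|)) for all z ∈ 𝔻, and yet sup_{z∈𝔻} |f(z)|(1−|z|²)^{p} = ∞ for p = (√(1+K)−1)/2. -/

import Mathlib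

open Complex Metric Filter Topology

lemma gHasDeriv (t : ℝ) (ht : 0 < t) :
    HasDerivAt (fun t : ℝ => t^2 * (1 - Real.log t)) (2*t*(1-Real.log t) - t) t := by
  have h1 : HasDerivAt (fun t : ℝ => t^2) (2*t) t := by simpa using (hasDerivAt_pow 2 t)
  have h2 : HasDerivAt (fun t : ℝ => 1 - Real.log t) (-t⁻¹) t :=
    (Real.hasDerivAt_log ht.ne').const_sub 1
  have := h1.fun_mul h2
  refine this.congr_deriv (Eq.symm ?_)
  field_simp
  ring

lemma gderiv (t : ℝ) (ht : 0 < t) :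
    deriv (fun t : ℝ => t^2 * (1 - Real.log t)) t = 2*t*(1-Real.log t) - t :=
  (gHasDeriv t ht).deriv

lemma gmono {y x : ℝ} (hy : 0 < y) (hyx : y ≤ x) (hx : x ≤ Real.exp (1/2)) :
    y^2*(1-Real.log y) ≤ x^2*(1-Real.log x) := by
  have hmono : MonotoneOn (fun t : ℝ => t^2 * (1 - Real.log t)) (Set.Icc y x) := by
    apply monotoneOn_of_deriv_nonneg (convex_Icc y x)
    · intro t ht
      exact ((gHasDeriv t (lt_of_lt_of_le hy ht.1)).differentiableAt).continuousAt.continuousWithinAt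
    · intro t ht
      rw [interior_Icc] at ht
      exact ((gHasDeriv t (hy.trans ht.1)).differentiableAt).differentiableWithinAt
    · intro t ht
      rw [interior_Icc] at ht
      have ht0 : 0 < t := hy.trans ht.1
      rw [gderiv t ht0]
      have hlog : Real.log t ≤ 1/2 := by
        calc Real.log t ≤ Real.log (Real.exp (1/2)) :=
              Real.log_le_log ht0 (le_of_lt (ht.2.trans_le hx))
          _ = 1/2 := Real.log_exp _
      nlinarith
  simpa using hmono (Set.left_mem_Icc.2 hyx) (Set.right_mem_Icc.2 hyx) hyx

lemma ganti {y x : ℝ} (hy : Real.exp (1/2) ≤ y) (hyx : y ≤ x) :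
    x^2*(1-Real.log x) ≤ y^2*(1-Real.log y) := by
  have hy0 : 0 < y := lt_of_lt_of_le (Real.exp_pos _) hy
  have hanti : AntitoneOn (fun t : ℝ => t^2 * (1 - Real.log t)) (Set.Icc y x) := by
    apply antitoneOn_of_deriv_nonpos (convex_Icc y x)
    · intro t ht
      exact ((gHasDeriv t (lt_of_lt_of_le hy0 ht.1)).differentiableAt).continuousAt.continuousWithinAt
    · intro t ht
      rw [interior_Icc] at ht
      exact ((gHasDeriv t (hy0.trans ht.1)).differentiableAt).differentiableWithinAt
    · intro t ht
      rw [interior_Icc] at ht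
      have ht0 : 0 < t := hy0.trans ht.1
      rw [gderiv t ht0]
      have hlog : 1/2 ≤ Real.log t := by
        calc (1/2 : ℝ) = Real.log (Real.exp (1/2)) := (Real.log_exp _).symm
          _ ≤ Real.log t := Real.log_le_log (Real.exp_pos _) (hy.trans (le_of_lt ht.1))
      nlinarith
  simpa using hanti (Set.left_mem_Icc.2 hyx) (Set.right_mem_Icc.2 hyx) hyx

lemma gmain {y x : ℝ} (hy : 0 < y) (hy1 : y ≤ 1) (hyx : y ≤ x) (hx2 : x ≤ 2) :
    y^2*(1-Real.log y) ≤ x^2*(1-Real.log x) := by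
  have he1 : (1:ℝ) ≤ Real.exp (1/2) := Real.one_le_exp (by norm_num)
  by_cases hxe : x ≤ Real.exp (1/2)
  · exact gmono hy hyx hxe
  · push_neg at hxe
    have h1 : y^2*(1-Real.log y) ≤ 1 := by
      have := gmono hy hy1 he1
      simpa using this
    have h2 : (1:ℝ) ≤ x^2*(1-Real.log x) := by
      have hx1 : Real.exp (1/2) ≤ x := le_of_lt hxe
      have hg2 : (1:ℝ) ≤ 2^2*(1-Real.log 2) := by
        nlinarith [Real.log_two_lt_d9]
      exact le_trans hg2 (ganti hx1 hx2)
    linarith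

lemma wslit {z : ℂ} (hz : z.re < 1) : (1 - z) ∈ Complex.slitPlane := by
  rw [Complex.mem_slitPlane_iff]
  left
  simp only [Complex.sub_re, Complex.one_re]
  linarith

lemma w_ne {z : ℂ} (hz : z.re < 1) : (1 - z) ≠ 0 :=
  Complex.slitPlane_ne_zero (wslit hz)

lemma e_ne : (Real.exp 1 : ℂ) ≠ 0 := Complex.ofReal_ne_zero.mpr (Real.exp_pos 1).ne'

lemma eslit {z : ℂ} (hz : z.re < 1) :
    ((Real.exp 1 : ℂ) / (1 - z)) ∈ Complex.slitPlane := by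
  rw [Complex.mem_slitPlane_iff]
  left
  rw [Complex.div_re]
  simp only [Complex.ofReal_re, Complex.ofReal_im]
  have h1 : (0:ℝ) < (1 - z).re := by simp only [Complex.sub_re, Complex.one_re]; linarith
  have h2 : 0 < Complex.normSq (1 - z) := Complex.normSq_pos.mpr (w_ne hz)
  have h3 := Real.exp_pos 1
  have : 0 < Real.exp 1 * (1 - z).re / Complex.normSq (1 - z) := by positivity
  simpa using this

lemma hasDerivL {z : ℂ} (hz : z.re < 1) :
    HasDerivAt (fun z : ℂ => Complex.log ((Real.exp 1 : ℂ) / (1 - z))) (1 - z)⁻¹ z := by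
  have hw : HasDerivAt (fun z : ℂ => 1 - z) (-1) z := (hasDerivAt_id z).const_sub 1
  have hdiv : HasDerivAt (fun z : ℂ => (Real.exp 1 : ℂ) / (1 - z))
      ((0 * (1-z) - (Real.exp 1 : ℂ) * (-1)) / (1-z)^2) z :=
    (hasDerivAt_const z _).div hw (w_ne hz)
  have := hdiv.clog (eslit hz)
  convert this using 1
  field_simp [w_ne hz]
  ring

lemma hasDerivF (c : ℂ) {z : ℂ} (hz : z.re < 1) :
    HasDerivAt (fun z : ℂ => (1-z)^(-c) * Complex.log ((Real.exp 1 : ℂ) / (1-z)))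
      ((1-z)^(-c-1) * (c * Complex.log ((Real.exp 1 : ℂ) / (1-z)) + 1)) z := by
  have hw : HasDerivAt (fun z : ℂ => 1 - z) (-1) z := (hasDerivAt_id z).const_sub 1
  have hpow : HasDerivAt (fun z : ℂ => (1-z)^(-c)) ((-c) * (1-z)^(-c-1) * (-1)) z :=
    hw.cpow_const (wslit hz)
  have := hpow.fun_mul (hasDerivL hz)
  refine this.congr_deriv (Eq.symm ?_)
  have h1 : (1-z)^(-c) * (1-z)⁻¹ = (1-z)^(-c-1) := by
    rw [Complex.cpow_sub _ _ (w_ne hz), Complex.cpow_one]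
    ring
  rw [h1]
  ring

lemma hasDerivG (c : ℂ) {z : ℂ} (hz : z.re < 1) :
    HasDerivAt (fun z : ℂ => (1-z)^(-c-1) * (c * Complex.log ((Real.exp 1 : ℂ) / (1-z)) + 1))
      ((1-z)^(-c-2) * (c*(c+1) * Complex.log ((Real.exp 1 : ℂ) / (1-z)) + (2*c+1))) z := by
  have hw : HasDerivAt (fun z : ℂ => 1 - z) (-1) z := (hasDerivAt_id z).const_sub 1
  have hpow : HasDerivAt (fun z : ℂ => (1-z)^(-c-1)) ((-c-1) * (1-z)^(-c-1-1) * (-1)) z :=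
    hw.cpow_const (wslit hz)
  have hlin : HasDerivAt (fun z : ℂ => c * Complex.log ((Real.exp 1 : ℂ) / (1-z)) + 1)
      (c * (1-z)⁻¹) z := ((hasDerivL hz).const_mul c).add_const 1
  have := hpow.fun_mul hlin
  refine this.congr_deriv (Eq.symm ?_)
  have h2 : (-c-1-1 : ℂ) = -c-2 := by ring
  rw [h2]
  have h5 : (1-z)^(-c-2 : ℂ) = (1-z)^(-c) * (1-z)⁻¹ * (1-z)⁻¹ := by
    rw [(by ring : (-c-2 : ℂ) = -c + -1 + -1), Complex.cpow_add _ _ (w_ne hz),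
      Complex.cpow_add _ _ (w_ne hz), Complex.cpow_neg_one]
  have h6 : (1-z)^(-c-1 : ℂ) = (1-z)^(-c) * (1-z)⁻¹ := by
    rw [(by ring : (-c-1 : ℂ) = -c + -1), Complex.cpow_add _ _ (w_ne hz), Complex.cpow_neg_one]
  linear_combination c * h5 - c * (1-z)⁻¹ * h6

lemma ode_algebra (K : ℝ) (hK : 0 ≤ K) {z : ℂ} (hz : z.re < 1)
    (hL : Complex.log ((Real.exp 1:ℂ)/(1-z)) ≠ 0) :
    (1-z)^(-(((Real.sqrt (1+K) - 1)/2 : ℝ) : ℂ)-2) *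
      ((((Real.sqrt (1+K) - 1)/2 : ℝ) : ℂ)*((((Real.sqrt (1+K) - 1)/2 : ℝ) : ℂ)+1) *
        Complex.log ((Real.exp 1:ℂ)/(1-z)) + (2*(((Real.sqrt (1+K) - 1)/2 : ℝ) : ℂ)+1)) +
    (-(((K : ℂ) + 4 * (Real.sqrt (1 + K) : ℂ) *
        (Complex.log ((Real.exp 1 : ℂ) / (1 - z)))⁻¹)) / (4 * (1 - z) ^ 2)) *
      ((1-z)^(-(((Real.sqrt (1+K) - 1)/2 : ℝ) : ℂ)) * Complex.log ((Real.exp 1:ℂ)/(1-z))) = 0 := by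
  set s : ℝ := Real.sqrt (1+K) with hs
  set c : ℂ := (((s - 1)/2 : ℝ) : ℂ) with hc
  set L : ℂ := Complex.log ((Real.exp 1:ℂ)/(1-z)) with hLdef
  have hs2 : s^2 = 1 + K := Real.sq_sqrt (by linarith)
  have hKc : (K : ℂ) = 4*c*(c+1) := by
    have hKr : K = 4*((s-1)/2)*((s-1)/2+1) := by nlinarith
    rw [hc, hKr]
    push_cast
    ring
  have hsc : (s : ℂ) = 2*c+1 := by rw [hc]; push_cast; ring
  have h5 : (1-z)^(-c-2 : ℂ) = (1-z)^(-c) * (1-z)⁻¹ * (1-z)⁻¹ := by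
    rw [(by ring : (-c-2 : ℂ) = -c + -1 + -1), Complex.cpow_add _ _ (w_ne hz),
      Complex.cpow_add _ _ (w_ne hz), Complex.cpow_neg_one]
  rw [hKc, hsc, h5]
  field_simp [w_ne hz]
  ring

lemma estimate3 (K : ℝ) (hK : 0 ≤ K) {z : ℂ} (hz : ‖z‖ < 1) :
    ‖(-(((K : ℂ) + 4 * (Real.sqrt (1 + K) : ℂ) *
        (Complex.log ((Real.exp 1 : ℂ) / (1 - z)))⁻¹)) / (4 * (1 - z) ^ 2))‖ *
      (1 - ‖z‖ ^ 2) ^ 2 ≤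
      K + 4 * Real.sqrt (1 + K) / Real.log (Real.exp 1 / (1 - ‖z‖)) := by
  set s : ℝ := Real.sqrt (1+K) with hs
  have hs1 : 1 ≤ s := by
    nlinarith [Real.sq_sqrt (show (0:ℝ) ≤ 1+K by linarith), Real.sqrt_nonneg (1+K)]
  set r : ℝ := ‖z‖ with hr
  have hr0 : 0 ≤ r := norm_nonneg z
  set b : ℝ := ‖(1 - z)‖ with hb
  have h1rb : 1 - r ≤ b := by
    have := norm_sub_norm_le (1:ℂ) z
    simpa using this
  have hb2 : b ≤ 2 := by
    have h := norm_sub_le (1:ℂ) z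
    simp only [norm_one] at h
    rw [← hb, ← hr] at h
    linarith
  have hb0 : 0 < b := by linarith
  set L : ℂ := Complex.log ((Real.exp 1 : ℂ) / (1 - z)) with hL
  set aL : ℝ := ‖L‖ with haL
  have hLre : L.re = 1 - Real.log b := by
    rw [hL, Complex.log_re, norm_div, Complex.norm_of_nonneg (Real.exp_pos 1).le, Real.log_div (Real.exp_ne_zero 1) hb0.ne',
      Real.log_exp]
  have haL1 : 1 - Real.log b ≤ aL := by
    rw [← hLre]
    exact Complex.re_le_norm L
  have hlogb : Real.log b < 1 := by
    calc Real.log b ≤ Real.log 2 := Real.log_le_log hb0 hb2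
      _ < 1 := by nlinarith [Real.log_two_lt_d9]
  have haLpos : 0 < aL := by linarith
  set lg : ℝ := Real.log (Real.exp 1 / (1 - r)) with hlg
  have hlgv : lg = 1 - Real.log (1 - r) := by
    rw [hlg, Real.log_div (Real.exp_ne_zero 1) (by linarith : (1:ℝ) - r ≠ 0), Real.log_exp]
  have hlg1 : 1 ≤ lg := by
    rw [hlgv]
    have : Real.log (1 - r) ≤ 0 := Real.log_nonpos (by linarith) (by linarith)
    linarith
  have hlg0 : 0 < lg := by linarith
  have habsA : ‖(-(((K : ℂ) + 4 * (s : ℂ) * L⁻¹)) / (4 * (1 - z) ^ 2))‖ =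
      ‖((K : ℂ) + 4 * (s : ℂ) * L⁻¹)‖ / (4 * b^2) := by
    rw [norm_div, norm_neg, norm_mul, norm_pow]
    norm_num
    rfl
  have hnum : ‖((K : ℂ) + 4 * (s : ℂ) * L⁻¹)‖ ≤ K + 4 * s / aL := by
    refine (norm_add_le _ _).trans ?_
    rw [norm_mul, norm_mul, norm_inv, Complex.norm_of_nonneg hK,
      Complex.norm_of_nonneg (by linarith : (0:ℝ) ≤ s), ← haL]
    have h4 : ‖(4:ℂ)‖ = 4 := by norm_num
    rw [h4, div_eq_mul_inv]
  rw [habsA, div_mul_eq_mul_div, div_le_iff₀ (by positivity : (0:ℝ) < 4*b^2)]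
  have hgm := gmain (y := 1-r) (x := b) (by linarith) (by linarith) h1rb hb2
  have hkey : (1-r^2)^2 * lg ≤ 4*(b^2*aL) := by
    calc (1-r^2)^2*lg = ((1-r)^2*(1-Real.log (1-r)))*(1+r)^2 := by rw [hlgv]; ring
      _ ≤ (b^2*(1-Real.log b))*(1+r)^2 := mul_le_mul_of_nonneg_right hgm (by positivity)
      _ ≤ (b^2*aL)*(1+r)^2 :=
          mul_le_mul_of_nonneg_right
            (mul_le_mul_of_nonneg_left haL1 (sq_nonneg b)) (by positivity)
      _ ≤ (b^2*aL)*4 := by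
          apply mul_le_mul_of_nonneg_left _ (by positivity)
          nlinarith
      _ = 4*(b^2*aL) := by ring
  have u1 : 0 ≤ 1 - r^2 := by nlinarith
  have u2 : 1 - r^2 ≤ 2*b := by nlinarith
  have t0 : (1-r^2)^2 ≤ 4*b^2 := by nlinarith
  have t1 : K*(1-r^2)^2 ≤ K*(4*b^2) := mul_le_mul_of_nonneg_left t0 hK
  have t2 : (4*s/aL)*(1-r^2)^2 ≤ (4*s/lg)*(4*b^2) := by
    rw [div_mul_eq_mul_div, div_mul_eq_mul_div, div_le_div_iff₀ haLpos hlg0]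
    have hmul := mul_le_mul_of_nonneg_left hkey (show (0:ℝ) ≤ 4*s by linarith)
    calc 4*s*(1-r^2)^2*lg = (4*s)*((1-r^2)^2*lg) := by ring
      _ ≤ (4*s)*(4*(b^2*aL)) := hmul
      _ = 4*s*(4*b^2)*aL := by ring
  calc ‖((K : ℂ) + 4 * (s : ℂ) * L⁻¹)‖ * (1-r^2)^2
      ≤ (K + 4*s/aL)*(1-r^2)^2 := mul_le_mul_of_nonneg_right hnum (by positivity)
    _ ≤ (K + 4*s/lg)*(4*b^2) := by
        have e1 : (K + 4*s/aL)*(1-r^2)^2 = K*(1-r^2)^2 + (4*s/aL)*(1-r^2)^2 := by ring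
        have e2 : (K + 4*s/lg)*(4*b^2) = K*(4*b^2) + (4*s/lg)*(4*b^2) := by ring
        rw [e1, e2]
        exact add_le_add t1 t2

lemma escape4 (K : ℝ) (hK : 0 ≤ K) (M : ℝ) :
    ∃ z ∈ ball (0:ℂ) 1,
      M < ‖((1 - z) ^ (-((((Real.sqrt (1 + K) - 1) / 2 : ℝ)) : ℂ)) *
          Complex.log ((Real.exp 1 : ℂ) / (1 - z)))‖ *
        (1 - ‖z‖ ^ 2) ^ ((Real.sqrt (1 + K) - 1) / 2) := by
  set s : ℝ := Real.sqrt (1+K) with hs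
  have hs1 : 1 ≤ s := by
    nlinarith [Real.sq_sqrt (show (0:ℝ) ≤ 1+K by linarith), Real.sqrt_nonneg (1+K)]
  set p : ℝ := (s - 1)/2 with hp
  have hp0 : 0 ≤ p := by rw [hp]; linarith
  set M' : ℝ := max M 0 + 1 with hM'
  have hM1 : 1 ≤ M' := by
    have := le_max_right M 0
    rw [hM']; linarith
  have hMM : M < M' := by
    have := le_max_left M 0
    rw [hM']; linarith
  set w : ℝ := Real.exp (-M') with hw
  have hw0 : 0 < w := Real.exp_pos _
  have hw1 : w < 1 := by
    rw [hw]
    calc Real.exp (-M') < Real.exp 0 := Real.exp_lt_exp.mpr (by linarith)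
      _ = 1 := Real.exp_zero
  set x : ℝ := 1 - w with hx
  have hx0 : 0 ≤ x := by rw [hx]; linarith
  have hx1 : x < 1 := by rw [hx]; linarith
  refine ⟨(x : ℂ), ?_, ?_⟩
  · rw [mem_ball_zero_iff, Complex.norm_of_nonneg hx0]
    exact hx1
  · have habsz : ‖(x : ℂ)‖ = x := by
      rw [Complex.norm_of_nonneg hx0]
    have hz1 : (1 : ℂ) - (x : ℂ) = ((w : ℝ) : ℂ) := by
      rw [hx]; push_cast; ring
    rw [habsz, hz1]
    have h1 : ‖(((w : ℝ) : ℂ) ^ (-(p : ℂ)))‖ = w ^ (-p) := by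
      rw [Complex.norm_cpow_eq_rpow_re_of_pos hw0]
      norm_num
    have h2 : (Real.exp 1 : ℂ) / ((w : ℝ) : ℂ) = ((Real.exp 1 / w : ℝ) : ℂ) := by
      push_cast; ring
    have h3 : Complex.log ((Real.exp 1 : ℂ) / ((w : ℝ) : ℂ)) = ((Real.log (Real.exp 1 / w) : ℝ) : ℂ) := by
      rw [h2, Complex.ofReal_log (by positivity : (0:ℝ) ≤ Real.exp 1 / w)]
    have h4 : Real.log (Real.exp 1 / w) = 1 + M' := by
      rw [hw, ← Real.exp_sub, Real.log_exp]; ring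
    rw [norm_mul, h1, h3, h4, Complex.norm_of_nonneg (by linarith : (0:ℝ) ≤ 1 + M')]
    have h5 : 1 - x^2 = w * (1 + x) := by rw [hx]; ring
    rw [h5]
    have h6 : (w * (1 + x)) ^ p = w ^ p * (1 + x) ^ p :=
      Real.mul_rpow (le_of_lt hw0) (by linarith)
    rw [h6]
    have h7 : w ^ (-p) * w ^ p = 1 := by
      rw [← Real.rpow_add hw0]; norm_num
    have h8 : (1:ℝ) ≤ (1 + x) ^ p := by
      calc (1:ℝ) = 1 ^ p := (Real.one_rpow p).symm
        _ ≤ (1 + x) ^ p := Real.rpow_le_rpow (by norm_num) (by linarith) hp0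
    calc M < M' := hMM
      _ ≤ (1 + M') * 1 := by linarith
      _ ≤ (1 + M') * (1 + x) ^ p := by
          apply mul_le_mul_of_nonneg_left h8 (by linarith)
      _ = w ^ (-p) * (1 + M') * (w ^ p * (1 + x) ^ p) := by
          rw [show w ^ (-p) * (1 + M') * (w ^ p * (1 + x) ^ p)
              = (w ^ (-p) * w ^ p) * ((1 + M') * (1 + x) ^ p) by ring, h7]
          ring

lemma Lne {z : ℂ} (hz : ‖z‖ < 1) :
    Complex.log ((Real.exp 1 : ℂ) / (1 - z)) ≠ 0 := by
  have h1rb : 1 - ‖z‖ ≤ ‖(1 - z)‖ := by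
    have := norm_sub_norm_le (1:ℂ) z
    simpa using this
  have hb2 : ‖(1 - z)‖ ≤ 2 := by
    have h := norm_sub_le (1:ℂ) z
    simp only [norm_one] at h
    linarith
  have hb0 : 0 < ‖(1 - z)‖ := by linarith
  have hLre : (Complex.log ((Real.exp 1 : ℂ) / (1 - z))).re
      = 1 - Real.log (‖(1 - z)‖) := by
    rw [Complex.log_re, norm_div, Complex.norm_of_nonneg (Real.exp_pos 1).le, Real.log_div (Real.exp_ne_zero 1) hb0.ne',
      Real.log_exp]
  have hlogb : Real.log (‖(1 - z)‖) < 1 := by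
    calc Real.log (‖(1 - z)‖) ≤ Real.log 2 := Real.log_le_log hb0 hb2
      _ < 1 := by nlinarith [Real.log_two_lt_d9]
  intro h
  rw [h] at hLre
  simp at hLre
  linarith

lemma absz_lt {z : ℂ} (hz : z ∈ ball (0:ℂ) 1) : ‖z‖ < 1 := by
  rwa [mem_ball_zero_iff] at hz

lemma re_lt {z : ℂ} (hz : z ∈ ball (0:ℂ) 1) : z.re < 1 :=
  lt_of_le_of_lt (Complex.re_le_norm z) (absz_lt hz)

theorem stmt_16 (K : ℝ) (hK : 0 ≤ K) (A f : ℂ → ℂ)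
    (hA : ∀ z ∈ ball (0:ℂ) 1,
      A z = -(((K : ℂ) + 4 * (Real.sqrt (1 + K) : ℂ) *
        (Complex.log ((Real.exp 1 : ℂ) / (1 - z)))⁻¹)) / (4 * (1 - z) ^ 2))
    (hf : ∀ z ∈ ball (0:ℂ) 1,
      f z = (1 - z) ^ (-((((Real.sqrt (1 + K) - 1) / 2 : ℝ)) : ℂ)) *
        Complex.log ((Real.exp 1 : ℂ) / (1 - z))) :
    AnalyticOnNhd ℂ f (ball (0:ℂ) 1) ∧
    (∀ z ∈ ball (0:ℂ) 1, deriv (deriv f) z + A z * f z = 0) ∧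
    (∀ z ∈ ball (0:ℂ) 1,
      ‖A z‖ * (1 - ‖z‖ ^ 2) ^ 2 ≤
        K + 4 * Real.sqrt (1 + K) / Real.log (Real.exp 1 / (1 - ‖z‖))) ∧
    (∀ M : ℝ, ∃ z ∈ ball (0:ℂ) 1,
      M < ‖f z‖ *
        (1 - ‖z‖ ^ 2) ^ ((Real.sqrt (1 + K) - 1) / 2)) := by
  set c : ℂ := (((Real.sqrt (1+K) - 1)/2 : ℝ) : ℂ) with hc
  have hopen : IsOpen (ball (0:ℂ) 1) := isOpen_ball
  have hfF : Set.EqOn f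
      (fun z : ℂ => (1-z)^(-c) * Complex.log ((Real.exp 1 : ℂ)/(1-z))) (ball (0:ℂ) 1) :=
    fun z hz => hf z hz
  have hev : ∀ z ∈ ball (0:ℂ) 1,
      f =ᶠ[nhds z] (fun z : ℂ => (1-z)^(-c) * Complex.log ((Real.exp 1 : ℂ)/(1-z))) :=
    fun z hz => Filter.eventuallyEq_of_mem (hopen.mem_nhds hz) hfF
  have hdf : ∀ z ∈ ball (0:ℂ) 1, HasDerivAt f
      ((1-z)^(-c-1) * (c * Complex.log ((Real.exp 1 : ℂ)/(1-z)) + 1)) z :=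
    fun z hz => (hasDerivF c (re_lt hz)).congr_of_eventuallyEq (hev z hz)
  have hdf' : Set.EqOn (deriv f)
      (fun z : ℂ => (1-z)^(-c-1) * (c * Complex.log ((Real.exp 1 : ℂ)/(1-z)) + 1))
      (ball (0:ℂ) 1) := fun z hz => (hdf z hz).deriv
  refine ⟨?_, ?_, ?_, ?_⟩
  · exact DifferentiableOn.analyticOnNhd
      (fun z hz => (hdf z hz).differentiableAt.differentiableWithinAt) hopen
  · intro z hz
    have hev2 : deriv f =ᶠ[nhds z]
        (fun z : ℂ => (1-z)^(-c-1) * (c * Complex.log ((Real.exp 1 : ℂ)/(1-z)) + 1)) :=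
      Filter.eventuallyEq_of_mem (hopen.mem_nhds hz) hdf'
    have hddf : HasDerivAt (deriv f)
        ((1-z)^(-c-2) * (c*(c+1) * Complex.log ((Real.exp 1 : ℂ)/(1-z)) + (2*c+1))) z :=
      (hasDerivG c (re_lt hz)).congr_of_eventuallyEq hev2
    rw [hddf.deriv, hA z hz, hf z hz]
    exact ode_algebra K hK (re_lt hz) (Lne (absz_lt hz))
  · intro z hz
    rw [hA z hz]
    exact estimate3 K hK (absz_lt hz)
  · intro M
    obtain ⟨z, hz, hlt⟩ := escape4 K hK M
    exact ⟨z, hz, by rw [hf z hz]; exact hlt⟩
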